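/- If a bivariate copula C has maximal correlation strictly less than one, then C(u, u) < u for all u ∈ (0,1). -/

import Mathlib

open Set Filter MeasureTheory ProbabilityTheory

lemma stmt11_aux {Ω : Type*} [MeasurableSpace Ω] (P : Measure Ω) [IsProbabilityMeasure P]
    (W : Ω → ℝ) (hW : Measurable W)
    (hWunif : P.map W = volume.restrict (Ioo (0:ℝ) 1))
    {u : ℝ} (hu0 : 0 < u) (hu1 : u < 1) :
    P (W ⁻¹' Iic u) = ENNReal.ofReal u := by
  rw [← Measure.map_apply hW measurableSet_Iic, hWunif,
    Measure.restrict_apply measurableSet_Iic]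
  have h : Iic u ∩ Ioo (0:ℝ) 1 = Ioc 0 u := by
    ext x
    constructor
    · rintro ⟨h1, h2, h3⟩; exact ⟨h2, h1⟩
    · rintro ⟨h1, h2⟩; exact ⟨h2, h1, lt_of_le_of_lt h2 hu1⟩
  rw [h, Real.volume_Ioc, sub_zero]

/-- if the copula `C` of `(U, V)` (with uniform `(0,1)` marginals) has
maximal correlation strictly less than one, then `C(u,u) < u` for all `u ∈ (0,1)`. -/
theorem stmt11 {Ω : Type*} [MeasurableSpace Ω] (P : Measure Ω) [IsProbabilityMeasure P]
    (U V : Ω → ℝ) (hU : Measurable U) (hV : Measurable V)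
    (hUunif : P.map U = volume.restrict (Ioo (0:ℝ) 1))
    (hVunif : P.map V = volume.restrict (Ioo (0:ℝ) 1))
    (hmaxcor : ∃ ρ : ℝ, ρ < 1 ∧ ∀ f g : ℝ → ℝ, Measurable f → Measurable g →
      MemLp (fun ω => f (U ω)) 2 P → MemLp (fun ω => g (V ω)) 2 P →
      0 < variance (fun ω => f (U ω)) P → 0 < variance (fun ω => g (V ω)) P →
      (∫ ω, (f (U ω) - ∫ ω', f (U ω') ∂P) * (g (V ω) - ∫ ω', g (V ω') ∂P) ∂P)
        / (Real.sqrt (variance (fun ω => f (U ω)) P)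
            * Real.sqrt (variance (fun ω => g (V ω)) P)) ≤ ρ) :
    ∀ u ∈ Ioo (0:ℝ) 1, (P {ω | U ω ≤ u ∧ V ω ≤ u}).toReal < u := by
  obtain ⟨ρ, hρ, hbound⟩ := hmaxcor
  rintro u ⟨hu0, hu1⟩
  by_contra hcon
  push_neg at hcon
  set f : ℝ → ℝ := (Iic u).indicator (fun _ => 1) with hf
  have hfm : Measurable f := measurable_const.indicator measurableSet_Iic
  set A := U ⁻¹' Iic u with hA
  set B := V ⁻¹' Iic u with hB
  have hAm : MeasurableSet A := hU measurableSet_Iic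
  have hBm : MeasurableSet B := hV measurableSet_Iic
  have hPA : P A = ENNReal.ofReal u := stmt11_aux P U hU hUunif hu0 hu1
  have hPB : P B = ENNReal.ofReal u := stmt11_aux P V hV hVunif hu0 hu1
  have hset : {ω | U ω ≤ u ∧ V ω ≤ u} = A ∩ B := rfl
  rw [hset] at hcon
  -- P (A ∩ B) = ofReal u
  have hle : P (A ∩ B) ≤ ENNReal.ofReal u := hPA ▸ measure_mono inter_subset_left
  have hPAB : P (A ∩ B) = ENNReal.ofReal u := by
    refine le_antisymm hle ?_
    have h1 : (P (A ∩ B)).toReal = u :=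
      le_antisymm (by
        calc (P (A ∩ B)).toReal ≤ (ENNReal.ofReal u).toReal :=
              ENNReal.toReal_mono ENNReal.ofReal_ne_top hle
          _ = u := ENNReal.toReal_ofReal hu0.le) hcon
    rw [← h1, ENNReal.ofReal_toReal (measure_ne_top P _)]
  -- the composed functions are indicators
  have hcompU : (fun ω => f (U ω)) = A.indicator (fun _ => (1:ℝ)) := by
    ext ω; by_cases h : U ω ≤ u <;> simp [hf, hA, Set.indicator_apply, h]
  have hcompV : (fun ω => f (V ω)) = B.indicator (fun _ => (1:ℝ)) := by
    ext ω; by_cases h : V ω ≤ u <;> simp [hf, hB, Set.indicator_apply, h]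
  -- Memℒp
  have hX2 : MemLp (fun ω => f (U ω)) 2 P := by
    rw [hcompU]; exact memLp_indicator_const 2 hAm 1 (Or.inr (measure_ne_top P A))
  have hY2 : MemLp (fun ω => f (V ω)) 2 P := by
    rw [hcompV]; exact memLp_indicator_const 2 hBm 1 (Or.inr (measure_ne_top P B))
  -- means
  have hmeanU : (∫ ω, f (U ω) ∂P) = u := by
    rw [hcompU, integral_indicator_const (1:ℝ) hAm, measureReal_def, hPA, smul_eq_mul, mul_one,
      ENNReal.toReal_ofReal hu0.le]
  have hmeanV : (∫ ω, f (V ω) ∂P) = u := by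
    rw [hcompV, integral_indicator_const (1:ℝ) hBm, measureReal_def, hPB, smul_eq_mul, mul_one,
      ENNReal.toReal_ofReal hu0.le]
  -- variances
  have hsqU : ∀ ω, (f (U ω)) ^ 2 = f (U ω) := by
    intro ω
    have h1 : f (U ω) = A.indicator (fun _ => (1:ℝ)) ω := congrFun hcompU ω
    by_cases h : ω ∈ A <;> simp [h1, Set.indicator_apply, h]
  have hvarU : variance (fun ω => f (U ω)) P = u - u ^ 2 := by
    rw [variance_eq_sub hX2, hmeanU]
    congr 1
    simp only [Pi.pow_apply]
    rw [integral_congr_ae (Eventually.of_forall hsqU), hmeanU]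
  have hsqV : ∀ ω, (f (V ω)) ^ 2 = f (V ω) := by
    intro ω
    have h1 : f (V ω) = B.indicator (fun _ => (1:ℝ)) ω := congrFun hcompV ω
    by_cases h : ω ∈ B <;> simp [h1, Set.indicator_apply, h]
  have hvarV : variance (fun ω => f (V ω)) P = u - u ^ 2 := by
    rw [variance_eq_sub hY2, hmeanV]
    congr 1
    simp only [Pi.pow_apply]
    rw [integral_congr_ae (Eventually.of_forall hsqV), hmeanV]
  have hvpos : 0 < u - u ^ 2 := by nlinarith
  -- covariance
  have hXint : Integrable (fun ω => f (U ω)) P := hX2.integrable (by norm_num)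
  have hYint : Integrable (fun ω => f (V ω)) P := hY2.integrable (by norm_num)
  have hABint : Integrable (fun ω => (A ∩ B).indicator (fun _ => (1:ℝ)) ω) P :=
    (integrable_const (1:ℝ)).indicator (hAm.inter hBm)
  have hptwise : ∀ ω, (f (U ω) - u) * (f (V ω) - u)
      = (A ∩ B).indicator (fun _ => (1:ℝ)) ω - u * f (U ω) - u * f (V ω) + u * u := by
    intro ω
    have h1 : f (U ω) = A.indicator (fun _ => (1:ℝ)) ω := congrFun hcompU ω
    have h2 : f (V ω) = B.indicator (fun _ => (1:ℝ)) ω := congrFun hcompV ω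
    by_cases hA' : ω ∈ A <;> by_cases hB' : ω ∈ B <;>
      simp [h1, h2, Set.indicator_apply, hA', hB'] <;> ring
  have hcov : (∫ ω, (f (U ω) - ∫ ω', f (U ω') ∂P) * (f (V ω) - ∫ ω', f (V ω') ∂P) ∂P)
      = u - u ^ 2 := by
    rw [hmeanU, hmeanV]
    have : (∫ ω, (f (U ω) - u) * (f (V ω) - u) ∂P)
        = ∫ ω, ((A ∩ B).indicator (fun _ => (1:ℝ)) ω - u * f (U ω) - u * f (V ω) + u * u) ∂P := by
      congr 1; ext ω; exact hptwise ω
    rw [this]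
    have hI2 : Integrable (fun ω => (A ∩ B).indicator (fun _ => (1:ℝ)) ω - u * f (U ω)) P :=
      hABint.sub (hXint.const_mul u)
    have hI1 : Integrable
        (fun ω => (A ∩ B).indicator (fun _ => (1:ℝ)) ω - u * f (U ω) - u * f (V ω)) P :=
      hI2.sub (hYint.const_mul u)
    rw [integral_add hI1 (integrable_const _),
      integral_sub hI2 (hYint.const_mul u),
      integral_sub hABint (hXint.const_mul u),
      integral_const_mul, integral_const_mul, hmeanU, hmeanV,
      integral_indicator_const (1:ℝ) (hAm.inter hBm), measureReal_def, hPAB, smul_eq_mul, mul_one,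
      ENNReal.toReal_ofReal hu0.le, integral_const]
    simp
    ring
  have := hbound f f hfm hfm hX2 hY2 (hvarU ▸ hvpos) (hvarV ▸ hvpos)
  rw [hcov, hvarU, hvarV, Real.mul_self_sqrt hvpos.le, div_self hvpos.ne'] at this
  linarith
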